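/- Let t > 1 be a real number. Then the set of triplets (a,b,c) ∈ ℝ³ such that the 4×4 Hankel matrix M_t = (m_{i+j})_{0 ≤ i,j ≤ 3} built from the sequence (m_0,…,m_6) = (1, 0, 1, a, t, b, c), i.e. the matrix with rows (1,0,1,a), (0,1,a,t), (1,a,t,b), (a,t,b,c), is positive definite, is a non-empty open subset of ℝ³; in particular it has positive Lebesgue measure. -/

import Mathlib

noncomputable section

/-- The 4×4 Hankel matrix associated with the moment sequence `(1, 0, 1, a, t, b, c)`. -/
def hankelMatrix (t a b c : ℝ) : Matrix (Fin 4) (Fin 4) ℝ :=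
  !![1, 0, 1, a; 0, 1, a, t; 1, a, t, b; a, t, b, c]

/-- The set of triplets `(a, b, c)` for which the Hankel matrix is positive definite. -/
def hankelPosDefSet (t : ℝ) : Set (ℝ × ℝ × ℝ) :=
  {p | (hankelMatrix t p.1 p.2.1 p.2.2).PosDef}

lemma hankel_quad (t a b c : ℝ) (x : Fin 4 → ℝ) :
    dotProduct x (Matrix.mulVec (hankelMatrix t a b c) x) =
      (x 0 + x 2 + a * x 3)^2 + (x 1 + a * x 2 + t * x 3)^2
        + (t - 1 - a^2) * (x 2)^2 + 2*(b - a - a*t) * (x 2) * (x 3)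
        + (c - a^2 - t^2) * (x 3)^2 := by
  simp [hankelMatrix, dotProduct, Matrix.mulVec, Fin.sum_univ_four]
  ring

lemma hankel_herm (t a b c : ℝ) : (hankelMatrix t a b c).IsHermitian := by
  ext i j
  fin_cases i <;> fin_cases j <;> simp [hankelMatrix, Matrix.conjTranspose_apply]

lemma hankel_posDef_iff (t a b c : ℝ) :
    (hankelMatrix t a b c).PosDef ↔
      0 < t - 1 - a^2 ∧
        (b - a - a*t)^2 < (t - 1 - a^2) * (c - a^2 - t^2) := by
  rw [Matrix.posDef_iff_dotProduct_mulVec]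
  constructor
  · rintro ⟨-, hq⟩
    have key : ∀ x : Fin 4 → ℝ, x ≠ 0 →
        0 < dotProduct x (Matrix.mulVec (hankelMatrix t a b c) x) := by
      intro x hx
      have := hq (x := x) hx
      rwa [star_trivial] at this
    have hα : 0 < t - 1 - a^2 := by
      have h := key ![-1, -a, 1, 0] (by
        intro h
        have := congrFun h 2
        simp [Matrix.cons_val] at this)
      rw [hankel_quad] at h
      simp at h
      nlinarith [h]
    refine ⟨hα, ?_⟩
    have h := key ![(b - a - a*t) - a*(t - 1 - a^2),
        a*(b - a - a*t) - t*(t - 1 - a^2), -(b - a - a*t), (t - 1 - a^2)] (by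
      intro h
      have := congrFun h 3
      simp at this
      exact hα.ne' this)
    rw [hankel_quad] at h
    simp at h
    have h2 : 0 < (t - 1 - a^2) * ((t - 1 - a^2) * (c - a^2 - t^2) - (b - a - a*t)^2) := by
      nlinarith [h]
    nlinarith [h2, hα, mul_pos hα hα]
  · rintro ⟨hα, hd⟩
    refine ⟨hankel_herm t a b c, ?_⟩
    intro x hx
    rw [star_trivial, hankel_quad]
    by_contra hle
    push_neg at hle
    have h3 : x 3 = 0 := by
      have h32 : (x 3)^2 ≤ 0 := by
        nlinarith [mul_nonneg hα.le (sq_nonneg (x 0 + x 2 + a * x 3)),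
          mul_nonneg hα.le (sq_nonneg (x 1 + a * x 2 + t * x 3)),
          sq_nonneg ((t - 1 - a^2) * x 2 + (b - a - a*t) * x 3),
          mul_nonneg hα.le (neg_nonneg.2 hle), sq_nonneg (x 3)]
      exact pow_eq_zero_iff (n := 2) (by norm_num) |>.mp (le_antisymm h32 (sq_nonneg _))
    rw [h3] at hle
    have h2 : x 2 = 0 := by
      have h22 : (x 2)^2 ≤ 0 := by
        nlinarith [sq_nonneg (x 0 + x 2 + a * 0), sq_nonneg (x 1 + a * x 2 + t * 0)]
      exact pow_eq_zero_iff (n := 2) (by norm_num) |>.mp (le_antisymm h22 (sq_nonneg _))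
    rw [h2] at hle
    have h1 : x 1 = 0 := by
      have h12 : (x 1)^2 ≤ 0 := by nlinarith [sq_nonneg (x 0 + 0 + a * 0)]
      exact pow_eq_zero_iff (n := 2) (by norm_num) |>.mp (le_antisymm h12 (sq_nonneg _))
    rw [h1] at hle
    have h0 : x 0 = 0 := by
      have h02 : (x 0)^2 ≤ 0 := by nlinarith
      exact pow_eq_zero_iff (n := 2) (by norm_num) |>.mp (le_antisymm h02 (sq_nonneg _))
    apply hx
    funext i
    fin_cases i <;> simpa using (by assumption : _)

/-- the set of triplets `(a,b,c)` making the Hankel matrix built from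
`(1, 0, 1, a, t, b, c)` positive definite is a non-empty open subset of `ℝ³`, hence of
positive Lebesgue measure. -/
theorem hankel_posDef_set_nonempty_open (t : ℝ) (ht : 1 < t) :
    (hankelPosDefSet t).Nonempty ∧ IsOpen (hankelPosDefSet t) ∧
      0 < MeasureTheory.volume (hankelPosDefSet t) := by
  have hset : hankelPosDefSet t =
      {p : ℝ × ℝ × ℝ | 0 < t - 1 - p.1^2} ∩
        {p : ℝ × ℝ × ℝ |
          (p.2.1 - p.1 - p.1*t)^2 < (t - 1 - p.1^2) * (p.2.2 - p.1^2 - t^2)} := by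
    ext p
    simp only [hankelPosDefSet, Set.mem_setOf_eq, Set.mem_inter_iff, hankel_posDef_iff]
  have hopen : IsOpen (hankelPosDefSet t) := by
    rw [hset]
    apply IsOpen.inter
    · exact isOpen_lt continuous_const (by fun_prop)
    · exact isOpen_lt (by fun_prop) (by fun_prop)
  have hne : (hankelPosDefSet t).Nonempty := by
    refine ⟨(0, 0, t^2 + 1), ?_⟩
    rw [hset]
    constructor <;> simp <;> nlinarith
  exact ⟨hne, hopen, hopen.measure_pos _ hne⟩
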